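/- Let k, s, p be positive integers with s ≥ 12k. If G has treewidth less than k and W ⊆ V(G) with |W| ≤ p·s, then there exist C ⊆ V(G) and non-empty sets A₁,…,A_t ⊆ V(G) with t < 6p such that (i) |C| < 6pk; (ii) |A_i ∩ (C ∪ W)| ≤ s for each i; (iii) G is the union of the induced subgraphs G[A₁],…,G[A_t]; and (iv) A_i ∩ A_j ⊆ C for all i < j. -/

import Mathlib

/-- A tree decomposition of a graph `G`. -/
structure TreeDecomp {V : Type} (G : SimpleGraph V) where
  /-- index type of the decomposition tree -/
  ι : Type
  /-- the decomposition tree -/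
  t : SimpleGraph ι
  tree : t.IsTree
  /-- the bags of the decomposition -/
  bag : ι → Set V
  mem_bag : ∀ v : V, ∃ i, v ∈ bag i
  edge_bag : ∀ ⦃u v : V⦄, G.Adj u v → ∃ i, u ∈ bag i ∧ v ∈ bag i
  bag_connected : ∀ v : V, (t.induce {i | v ∈ bag i}).Connected

/-- `G` has treewidth at most `k`: there is a tree decomposition all of whose
bags have at most `k + 1` vertices. -/
def TreewidthLE {V : Type} (G : SimpleGraph V) (k : ℕ) : Prop :=
  ∃ D : TreeDecomp G, ∀ i, (D.bag i).ncard ≤ k + 1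


open SimpleGraph

namespace TWS

variable {ι : Type} {t : SimpleGraph ι}

/-- `Avoid t c i j`: there is a walk from `i` to `j` avoiding `c`. -/
def Avoid (t : SimpleGraph ι) (c i j : ι) : Prop := ∃ w : t.Walk i j, c ∉ w.support

lemma Avoid.ne_left {c i j : ι} (h : Avoid t c i j) : i ≠ c := by
  obtain ⟨w, hw⟩ := h
  intro h'; exact hw (h' ▸ w.start_mem_support)

lemma Avoid.ne_right {c i j : ι} (h : Avoid t c i j) : j ≠ c := by
  obtain ⟨w, hw⟩ := h
  intro h'; exact hw (h' ▸ w.end_mem_support)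

lemma avoid_refl {c i : ι} (h : i ≠ c) : Avoid t c i i :=
  ⟨Walk.nil, by simp [Ne.symm h]⟩

lemma Avoid.symm {c i j : ι} (h : Avoid t c i j) : Avoid t c j i := by
  obtain ⟨w, hw⟩ := h
  exact ⟨w.reverse, by simpa using hw⟩

lemma Avoid.trans {c i j l : ι} (h : Avoid t c i j) (h' : Avoid t c j l) :
    Avoid t c i l := by
  obtain ⟨w, hw⟩ := h
  obtain ⟨w', hw'⟩ := h'
  refine ⟨w.append w', ?_⟩
  rw [Walk.support_append]
  intro hc
  rcases List.mem_append.1 hc with h1 | h1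
  · exact hw h1
  · exact hw' (List.mem_of_mem_tail h1)

lemma avoid_of_adj {c i j : ι} (h : t.Adj i j) (hi : i ≠ c) (hj : j ≠ c) :
    Avoid t c i j := by
  refine ⟨Walk.cons h Walk.nil, ?_⟩
  simp [Ne.symm hi, Ne.symm hj]

/-- The unique path between two vertices of a tree. -/
noncomputable def pt (ht : t.IsTree) (a b : ι) : t.Walk a b := (ht.existsUnique_path a b).choose

lemma pt_isPath (ht : t.IsTree) (a b : ι) : (pt ht a b).IsPath := (ht.existsUnique_path a b).choose_spec.1

lemma pt_unique (ht : t.IsTree) {a b : ι} (w : t.Walk a b) (hw : w.IsPath) : w = pt ht a b :=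
  (ht.existsUnique_path a b).choose_spec.2 w hw

lemma Avoid.not_mem_pt (ht : t.IsTree) {c a b : ι} (h : Avoid t c a b) : c ∉ (pt ht a b).support := by
  classical
  obtain ⟨w, hw⟩ := h
  have h1 : (w.toPath : t.Walk a b) = pt ht a b := pt_unique ht _ (w.toPath.2)
  rw [← h1]
  exact fun hc => hw (w.support_toPath_subset hc)

lemma avoid_of_not_mem_pt (ht : t.IsTree) {c a b : ι} (h : c ∉ (pt ht a b).support) : Avoid t c a b :=
  ⟨pt ht a b, h⟩

/-- Two distinct neighbours of `u` lie in different components of `t - u`. -/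
lemma eq_of_adj_avoid (ht : t.IsTree) {u x y : ι} (hx : t.Adj u x) (hy : t.Adj u y)
    (h : Avoid t u x y) : x = y := by
  by_contra hne
  have hp : (Walk.cons hx.symm (Walk.cons hy Walk.nil) : t.Walk x y).IsPath := by
    rw [Walk.isPath_def]
    simp [Walk.support, hx.ne', hne, hy.ne]
  have := pt_unique ht _ hp
  have hu : u ∈ (pt ht x y).support := by
    rw [← this]; simp
  exact h.not_mem_pt ht hu

/-- The second vertex of the path from `u` to `j`. -/
lemma exists_second (ht : t.IsTree) {u j : ι} (hj : j ≠ u) :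
    ∃ x, t.Adj u x ∧ Avoid t u x j ∧ x ∈ (pt ht u j).support := by
  have key : ∀ (w : t.Walk u j), w.IsPath →
      ∃ x, t.Adj u x ∧ Avoid t u x j ∧ x ∈ w.support := by
    intro w hw
    cases w with
    | nil => exact absurd rfl hj.symm
    | cons h q =>
      rename_i y
      have hnd := hw.support_nodup
      rw [Walk.support_cons] at hnd
      have hu : u ∉ q.support := (List.nodup_cons.1 hnd).1
      exact ⟨y, h, ⟨q, hu⟩, by rw [Walk.support_cons]; exact List.mem_cons_of_mem _ q.start_mem_support⟩
  exact key _ (pt_isPath ht u j)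

lemma second_mem (ht : t.IsTree) {u x j : ι} (hx : t.Adj u x) (h : Avoid t u x j) :
    x ∈ (pt ht u j).support := by
  obtain ⟨y, hy, hyj, hymem⟩ := exists_second ht (h.ne_right)
  have : y = x := eq_of_adj_avoid ht hy hx (hyj.trans h.symm)
  rwa [← this]

/-- Any vertex on the path from `u` to `j` other than `u` is connected to `j`
avoiding `u`. -/
lemma avoid_of_mem_pt (ht : t.IsTree) {u j y : ι} (hy : y ∈ (pt ht u j).support) (hyu : y ≠ u) :
    Avoid t u y j := by
  classical
  set w := pt ht u j with hw
  have hspec := w.take_spec hy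
  have hnd := (pt_isPath ht u j).support_nodup
  refine ⟨w.dropUntil y hy, ?_⟩
  have hns : w.support = (w.takeUntil y hy).support ++ (w.dropUntil y hy).support.tail := by
    rw [← Walk.support_append, hspec]
  rw [hns] at hnd
  have hdisj := (List.nodup_append.1 hnd).2.2
  have humem : u ∈ (w.takeUntil y hy).support := (w.takeUntil y hy).start_mem_support
  have hutail : u ∉ (w.dropUntil y hy).support.tail := fun hc => hdisj u humem u hc rfl
  intro hc
  rw [Walk.support_eq_cons] at hc
  rcases List.mem_cons.1 hc with h1 | h1
  · exact hyu h1.symm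
  · exact hutail h1

/-- Triangle property: the path from `a` to `b` is contained in the union of the
paths from `a` to `c` and from `c` to `b`. -/
lemma pt_support_subset (ht : t.IsTree) (a b c : ι) :
    ∀ x ∈ (pt ht a b).support, x ∈ (pt ht a c).support ∨ x ∈ (pt ht c b).support := by
  classical
  intro x hx
  set w := (pt ht a c).append (pt ht c b) with hw
  have h1 : (w.toPath : t.Walk a b) = pt ht a b := pt_unique ht _ (w.toPath.2)
  have h2 : x ∈ w.support := by
    apply w.support_toPath_subset
    rw [h1]; exact hx
  rw [hw, Walk.support_append] at h2
  rcases List.mem_append.1 h2 with h3 | h3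
  · exact Or.inl h3
  · exact Or.inr (List.mem_of_mem_tail h3)

lemma pt_reverse (ht : t.IsTree) (a b : ι) : pt ht b a = (pt ht a b).reverse :=
  (pt_unique ht _ ((pt_isPath ht a b).reverse)).symm

lemma mem_pt_symm (ht : t.IsTree) {a b x : ι} (h : x ∈ (pt ht a b).support) : x ∈ (pt ht b a).support := by
  rw [pt_reverse ht]
  simpa using h

variable {V : Type} [Fintype V]

/-! ### Components of `t - u` -/

def Cl (t : SimpleGraph ι) (u x : ι) : Set ι := {j | Avoid t u x j}

lemma mem_Cl_self {u x : ι} (h : x ≠ u) : x ∈ Cl t u x := avoid_refl h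

lemma Cl_ne {u x j : ι} (h : j ∈ Cl t u x) : j ≠ u := Avoid.ne_right h

lemma Cl_closed {u x j j' : ι} (h : j ∈ Cl t u x) (h' : Avoid t u j j') :
    j' ∈ Cl t u x := Avoid.trans h h'

lemma Cl_eq {u x y : ι} (h : Avoid t u x y) : Cl t u x = Cl t u y := by
  ext j
  exact ⟨fun hj => (h.symm).trans hj, fun hj => h.trans hj⟩

/-! ### Weights -/

/-- weight of a set of nodes: number of `Z`-vertices assigned into it by `φ`. -/
noncomputable def mu (Z : Set V) (φ : V → ι) (T : Set ι) : ℕ :=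
  {v | v ∈ Z ∧ φ v ∈ T}.ncard

lemma mu_mono (Z : Set V) (φ : V → ι) {T T' : Set ι} (h : T ⊆ T') :
    mu Z φ T ≤ mu Z φ T' :=
  Set.ncard_le_ncard (fun v hv => ⟨hv.1, h hv.2⟩) (Set.toFinite _)

lemma mu_union_le (Z : Set V) (φ : V → ι) (T T' : Set ι) :
    mu Z φ (T ∪ T') ≤ mu Z φ T + mu Z φ T' := by
  have : {v | v ∈ Z ∧ φ v ∈ T ∪ T'} = {v | v ∈ Z ∧ φ v ∈ T} ∪ {v | v ∈ Z ∧ φ v ∈ T'} := by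
    ext v; simp only [Set.mem_setOf_eq, Set.mem_union]; tauto
  rw [mu, this]
  exact Set.ncard_union_le _ _

lemma mu_univ (Z : Set V) (φ : V → ι) : mu Z φ Set.univ = Z.ncard := by
  unfold mu; congr 1; ext v; simp

lemma exists_of_mu_pos {Z : Set V} {φ : V → ι} {T : Set ι} (h : 0 < mu Z φ T) :
    ∃ v, v ∈ Z ∧ φ v ∈ T := by
  obtain ⟨v, hv⟩ := Set.nonempty_of_ncard_ne_zero (Nat.ne_of_gt h)
  exact ⟨v, hv.1, hv.2⟩

/-! ### Grouping branches into a chunk of medium weight -/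

lemma group (Z : Set V) (φ : V → ι) (u : ι) (τ lam : ℕ) (h2lam : 2 * lam ≤ τ) :
    ∀ (n : ℕ) (Y : Finset ι), Y.card ≤ n →
    (∀ f ∈ Y, f ≠ u) →
    (∀ f ∈ Y, mu Z φ (Cl t u f) ≤ τ) →
    ∃ R : Set ι,
      (∀ a ∈ R, ∀ b, Avoid t u a b → b ∈ R) ∧
      (∀ a ∈ R, a ≠ u) ∧
      mu Z φ R ≤ τ ∧
      (lam ≤ mu Z φ R ∨ ∀ f ∈ Y, f ∈ R) := by
  intro n
  induction n with
  | zero =>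
    intro Y hY _ _
    refine ⟨∅, by simp, by simp, ?_, Or.inr (by intro f hf; simp_all)⟩
    · have h0 : {v | v ∈ Z ∧ φ v ∈ (∅ : Set ι)} = (∅ : Set V) := by ext v; simp
      unfold mu; rw [h0, Set.ncard_empty]; omega
  | succ n IH =>
    intro Y hY hne hwt
    classical
    rcases Y.eq_empty_or_nonempty with rfl | ⟨f, hf⟩
    · refine ⟨∅, by simp, by simp, ?_, Or.inr (by simp)⟩
      have h0 : {v | v ∈ Z ∧ φ v ∈ (∅ : Set ι)} = (∅ : Set V) := by ext v; simp
      unfold mu; rw [h0, Set.ncard_empty]; omega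
    · by_cases hbig : lam ≤ mu Z φ (Cl t u f)
      · exact ⟨Cl t u f, fun a ha b hab => Cl_closed ha hab,
          fun a ha => Cl_ne ha, hwt f hf, Or.inl hbig⟩
      · set Y' := Y.filter (fun g => ¬ Avoid t u f g) with hY'
        have hY'sub : Y' ⊆ Y.erase f := by
          intro g hg
          rw [hY', Finset.mem_filter] at hg
          refine Finset.mem_erase.2 ⟨?_, hg.1⟩
          intro h; subst h
          exact hg.2 (avoid_refl (hne g hg.1))
        have hY'card : Y'.card ≤ n := by
          have h1 := Finset.card_le_card hY'sub
          have h2 : (Y.erase f).card = Y.card - 1 := Finset.card_erase_of_mem hf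
          have h3 : 1 ≤ Y.card := Finset.card_pos.2 ⟨f, hf⟩
          omega
        obtain ⟨R', hR'cl, hR'ne, hR'le, hR'alt⟩ := IH Y' hY'card
          (fun g hg => hne g (Finset.mem_of_mem_filter g hg))
          (fun g hg => hwt g (Finset.mem_of_mem_filter g hg))
        by_cases hbig' : lam ≤ mu Z φ R'
        · exact ⟨R', hR'cl, hR'ne, hR'le, Or.inl hbig'⟩
        rcases hR'alt with hbig'' | hcov
        · exact absurd hbig'' hbig'
        · refine ⟨Cl t u f ∪ R', ?_, ?_, ?_, Or.inr ?_⟩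
          · rintro a (ha | ha) b hab
            · exact Or.inl (Cl_closed ha hab)
            · exact Or.inr (hR'cl a ha b hab)
          · rintro a (ha | ha)
            · exact Cl_ne ha
            · exact hR'ne a ha
          · have h1 := mu_union_le Z φ (Cl t u f) R'
            omega
          · intro g hg
            by_cases hA : Avoid t u f g
            · exact Or.inl hA
            · exact Or.inr (hcov g (by rw [hY', Finset.mem_filter]; exact ⟨hg, hA⟩))

/-! ### The hull of the weighted nodes, and descent to a balanced node -/

/-- hull: union of the supports of paths from `r` to the weighted nodes. -/
def hull (ht : t.IsTree) (Z : Set V) (φ : V → ι) (r : ι) : Set ι :=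
  {x | ∃ f, (f = r ∨ ∃ v ∈ Z, φ v = f) ∧ x ∈ ((pt ht r f).support)}

lemma hull_finite (ht : t.IsTree) (Z : Set V) (φ : V → ι) (r : ι) :
    (hull ht Z φ r).Finite := by
  have h1 : hull ht Z φ r = ⋃ f ∈ insert r (φ '' Z), {x | x ∈ (pt ht r f).support} := by
    ext x
    simp only [hull, Set.mem_setOf_eq, Set.mem_iUnion, Set.mem_insert_iff, Set.mem_image]
    constructor
    · rintro ⟨f, hf | hf, hx⟩
      · exact ⟨f, Or.inl hf, hx⟩
      · exact ⟨f, Or.inr (by obtain ⟨v, hv, hvf⟩ := hf; exact ⟨v, hv, hvf⟩), hx⟩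
    · rintro ⟨f, hf | hf, hx⟩
      · exact ⟨f, Or.inl hf, hx⟩
      · obtain ⟨v, hv, hvf⟩ := hf; exact ⟨f, Or.inr ⟨v, hv, hvf⟩, hx⟩
  rw [h1]
  exact Set.Finite.biUnion ((Z.toFinite.image φ).insert r) (fun f _ => (pt ht r f).support.finite_toSet)

/-- restriction of paths from the root: if `d` lies on a path from `r`
contained in the hull, so does the whole path from `r` to `d`. -/
lemma pt_sub_of_mem (ht : t.IsTree) {r z d : ι} (hd : d ∈ (pt ht r z).support) :
    ∀ x ∈ (pt ht r d).support, x ∈ (pt ht r z).support := by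
  classical
  have hp : ((pt ht r z).takeUntil d hd).IsPath := (pt_isPath ht r z).takeUntil hd
  have he : (pt ht r z).takeUntil d hd = pt ht r d := pt_unique ht _ hp
  intro x hx
  rw [← he] at hx
  exact (pt ht r z).support_takeUntil_subset hd hx

lemma descend (ht : t.IsTree) (Z : Set V) (φ : V → ι) (r : ι) (τ : ℕ) :
    ∀ (n : ℕ) (u : ι) (Up : Set ι),
    ((hull ht Z φ r) \ Up).ncard ≤ n →
    (Up = ∅ ∨ ∃ x, t.Adj u x ∧ Up = Cl t u x) →
    τ < mu Z φ Upᶜ →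
    (∀ y ∈ (pt ht r u).support, y ∈ hull ht Z φ r) →
    ∃ (u' : ι) (Up' : Set ι),
      (Up' = ∅ ∨ ∃ x, t.Adj u' x ∧ Up' = Cl t u' x) ∧
      τ < mu Z φ Up'ᶜ ∧
      (∀ x, t.Adj u' x → x ∉ Up' → mu Z φ (Cl t u' x) ≤ τ) := by
  intro n
  induction n with
  | zero =>
    intro u Up hn hUp hw hIh
    -- the hull minus Up contains u, so its cardinality is positive... unless stop holds anyway
    by_cases hstop : ∀ x, t.Adj u x → x ∉ Up → mu Z φ (Cl t u x) ≤ τ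
    · exact ⟨u, Up, hUp, hw, hstop⟩
    · exfalso
      have hu_mem : u ∈ hull ht Z φ r \ Up := by
        constructor
        · exact hIh u (pt ht r u).end_mem_support
        · rcases hUp with rfl | ⟨x, hx, rfl⟩
          · simp
          · exact fun hu => (Cl_ne hu) rfl
      have : 0 < (hull ht Z φ r \ Up).ncard :=
        Set.ncard_pos ((hull_finite ht Z φ r).diff) |>.2 ⟨u, hu_mem⟩
      omega
  | succ n IH =>
    intro u Up hn hUp hw hIh
    by_cases hstop : ∀ x, t.Adj u x → x ∉ Up → mu Z φ (Cl t u x) ≤ τ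
    · exact ⟨u, Up, hUp, hw, hstop⟩
    push_neg at hstop
    obtain ⟨d, hadj, hdUp, hdw⟩ := hstop
    -- the heavy branch contains a weighted node f
    obtain ⟨v, hvZ, hvf⟩ := exists_of_mu_pos (show 0 < mu Z φ (Cl t u d) by omega)
    set f := φ v with hf
    have hdf : Avoid t u d f := hvf
    have hd_mem : d ∈ (pt ht u f).support := second_mem ht hadj hdf
    have hfH : ∀ x ∈ (pt ht r f).support, x ∈ hull ht Z φ r := by
      intro x hx
      exact ⟨f, Or.inr ⟨v, hvZ, rfl⟩, hx⟩
    -- d is in the hull, and the path from r to d is in the hull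
    have hdH : ∀ x ∈ (pt ht r d).support, x ∈ hull ht Z φ r := by
      rcases pt_support_subset ht u f r d hd_mem with hc | hc
      · have : d ∈ (pt ht r u).support := mem_pt_symm ht hc
        intro x hx
        exact hIh _ (pt_sub_of_mem ht this x hx)
      · intro x hx
        exact hfH _ (pt_sub_of_mem ht hc x hx)
    -- new up-set
    set Up' := Cl t d u with hUp'
    have hsub : Cl t u d ⊆ Up'ᶜ := by
      intro j hj hj'
      have h1 : Avoid t u d j := hj
      have h2 : Avoid t d u j := hj'
      exact h2.not_mem_pt ht (second_mem ht hadj h1)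
    have hw' : τ < mu Z φ Up'ᶜ := lt_of_lt_of_le hdw (mu_mono Z φ hsub)
    have hUpsub : Up ∪ {u} ⊆ Up' := by
      rintro j (hj | hj)
      · rcases hUp with rfl | ⟨x₀, hx₀, rfl⟩
        · exact absurd hj (Set.notMem_empty j)
        · have hxj : Avoid t u x₀ j := hj
          have hdns : d ∉ (pt ht u j).support := by
            intro hc
            have hdu : d ≠ u := hadj.ne'
            have : Avoid t u d j := avoid_of_mem_pt ht hc hdu
            exact hdUp (hxj.trans this.symm)
          exact avoid_of_not_mem_pt ht hdns
      · have : j = u := hj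
        subst this
        exact avoid_refl hadj.ne
    have hmeas : (hull ht Z φ r \ Up').ncard ≤ n := by
      have h1 : hull ht Z φ r \ Up' ⊆ (hull ht Z φ r \ Up) \ {u} := by
        intro x hx
        refine ⟨⟨hx.1, fun hc => hx.2 (hUpsub (Or.inl hc))⟩, fun hc => hx.2 (hUpsub (Or.inr hc))⟩
      have hu_mem : u ∈ hull ht Z φ r \ Up := by
        constructor
        · exact hIh u (pt ht r u).end_mem_support
        · rcases hUp with rfl | ⟨x, hx, rfl⟩
          · simp
          · exact fun hu => (Cl_ne hu) rfl
      have h2 := Set.ncard_le_ncard h1 (((hull_finite ht Z φ r).diff).diff)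
      have h3 := Set.ncard_diff_singleton_lt_of_mem hu_mem ((hull_finite ht Z φ r).diff)
      omega
    exact IH d Up' hmeas (Or.inr ⟨u, hadj.symm, rfl⟩) hw' hdH

/-! ### The main recursion -/

lemma main_rec (G : SimpleGraph V) (ht : t.IsTree) (k s : ℕ) (hk : 1 ≤ k)
    (hsk : 12 * k ≤ s) :
    ∀ (m : ℕ) (b : ι → Set V) (Z : Set V),
    Z.ncard ≤ m →
    (∀ i, (b i).ncard ≤ k) →
    (∀ x y : V, G.Adj x y → x ∈ (⋃ i, b i) → y ∈ (⋃ i, b i) → ∃ i, x ∈ b i ∧ y ∈ b i) →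
    (∀ (v : V) (i j c : ι), v ∈ b i → v ∈ b j → v ∉ b c → Avoid t c i j) →
    Z ⊆ ⋃ i, b i →
    ∃ (C : Set V) (l : List (Set V)),
      C ⊆ (⋃ i, b i) ∧
      C.ncard ≤ k * (l.length - 1) ∧
      ((s+2)/3 - k) * (l.length - 1) ≤ Z.ncard ∧
      (∀ A ∈ l, A.Nonempty) ∧
      (∀ A ∈ l, A ⊆ ⋃ i, b i) ∧
      (∀ x ∈ ⋃ i, b i, ∃ A ∈ l, x ∈ A) ∧
      (∀ x y : V, G.Adj x y → x ∈ (⋃ i, b i) → y ∈ (⋃ i, b i) → ∃ A ∈ l, x ∈ A ∧ y ∈ A) ∧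
      List.Pairwise (fun A B => A ∩ B ⊆ C) l ∧
      (∀ A ∈ l, (A ∩ (C ∪ Z)).ncard ≤ s) := by
  intro m
  induction m using Nat.strong_induction_on with
  | _ m IH =>
  intro b Z hZm hsize hedge hconn hZU
  classical
  by_cases hbase : Z.ncard ≤ s
  · -- base case: a single cluster (or none)
    by_cases hU : (⋃ i, b i) = ∅
    · refine ⟨∅, [], by simp, by simp, by simp, by simp, by simp, ?_, ?_, by simp, by simp⟩
      · intro x hx; rw [hU] at hx; exact absurd hx (Set.notMem_empty x)
      · intro x y _ hx _; rw [hU] at hx; exact absurd hx (Set.notMem_empty x)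
    · refine ⟨∅, [⋃ i, b i], by simp, by simp, by simp, ?_, by simp, ?_, ?_, by simp, ?_⟩
      · intro A hA; rw [List.mem_singleton] at hA; subst hA
        exact Set.nonempty_iff_ne_empty.2 hU
      · intro x hx; exact ⟨_, List.mem_singleton_self _, hx⟩
      · intro x y _ hx hy; exact ⟨_, List.mem_singleton_self _, hx, hy⟩
      · intro A hA; rw [List.mem_singleton] at hA; subst hA
        refine le_trans (Set.ncard_le_ncard ?_ (Set.toFinite _)) hbase
        intro x hx
        rcases hx.2 with h | h
        · exact absurd h (Set.notMem_empty x)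
        · exact h
  · -- recursive case
    push_neg at hbase
    set lam := (s+2)/3 with hlamdef
    set τ := s - 2*k with hτdef
    have hmod := Nat.div_add_mod (s+2) 3
    have hmodlt : (s+2) % 3 < 3 := Nat.mod_lt _ (by norm_num)
    have hlam1 : 3 * lam ≤ s + 2 := by omega
    have hlam2 : s ≤ 3 * lam := by omega
    have hlamk : k + 1 ≤ lam := by omega
    have h2lam : 2 * lam ≤ τ := by omega
    have hlamτ : lam + k ≤ τ := by omega
    have hZne : Z.Nonempty := by
      apply Set.nonempty_of_ncard_ne_zero; omega
    obtain ⟨v₀, hv₀⟩ := hZne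
    obtain ⟨i₀, hi₀⟩ := Set.mem_iUnion.1 (hZU hv₀)
    have hι : Nonempty ι := ⟨i₀⟩
    set φ : V → ι := fun v => if h : ∃ i, v ∈ b i then h.choose else Classical.arbitrary ι
      with hφdef
    have hφ : ∀ v ∈ Z, v ∈ b (φ v) := by
      intro v hv
      have h : ∃ i, v ∈ b i := Set.mem_iUnion.1 (hZU hv)
      rw [hφdef]; simp only [dif_pos h]; exact h.choose_spec
    have hmu_singleton : ∀ x : ι, mu Z φ {x} ≤ k := by
      intro x
      refine le_trans (Set.ncard_le_ncard ?_ (Set.toFinite _)) (hsize x)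
      intro v hv
      have : φ v = x := hv.2
      have := hφ v hv.1
      rwa [‹φ v = x›] at this
    set r := φ v₀ with hrdef
    -- descend to a balanced node
    obtain ⟨u, Up, hUp, hw, hstop⟩ :=
      descend ht Z φ r τ ((hull ht Z φ r \ (∅ : Set ι)).ncard) r ∅ le_rfl (Or.inl rfl)
        (by rw [Set.compl_empty, mu_univ]; omega)
        (fun y hy => ⟨r, Or.inl rfl, hy⟩)
    -- all classes not meeting Up are light
    have hlight : ∀ f, f ≠ u → f ∉ Up → mu Z φ (Cl t u f) ≤ τ := by
      intro f hfu hfUp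
      obtain ⟨x, hx, hxf, -⟩ := exists_second ht hfu
      have hxUp : x ∉ Up := by
        intro hxUp
        rcases hUp with rfl | ⟨x₀, hx₀, rfl⟩
        · exact absurd hxUp (Set.notMem_empty x)
        · exact hfUp ((show Avoid t u x₀ x from hxUp).trans hxf)
      have hCl : Cl t u x = Cl t u f := Cl_eq hxf
      rw [← hCl]
      exact hstop x hx hxUp
    -- group the light classes
    set Y : Finset ι := ((Z.toFinite.image φ).toFinset).filter (fun f => f ≠ u ∧ f ∉ Up)
      with hYdef
    obtain ⟨R, hRcl, hRne, hRle, halt⟩ :=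
      group Z φ u τ lam h2lam Y.card Y le_rfl
        (fun f hf => ((Finset.mem_filter.1 hf).2).1)
        (fun f hf => hlight f ((Finset.mem_filter.1 hf).2).1 ((Finset.mem_filter.1 hf).2).2)
    have hRlam : lam ≤ mu Z φ R := by
      rcases halt with h | hcov
      · exact h
      · have h1 : mu Z φ Upᶜ ≤ mu Z φ (Upᶜ \ {u}) + mu Z φ {u} := by
          refine le_trans (mu_mono Z φ ?_) (mu_union_le Z φ _ _)
          intro x hx
          by_cases hxu : x = u
          · exact Or.inr (by simp [hxu])
          · exact Or.inl ⟨hx, by simp [hxu]⟩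
        have h2 : mu Z φ (Upᶜ \ {u}) ≤ mu Z φ R := by
          refine Set.ncard_le_ncard ?_ (Set.toFinite _)
          rintro v ⟨hvZ, hvf⟩
          refine ⟨hvZ, ?_⟩
          have hfY : φ v ∈ Y := by
            rw [hYdef, Finset.mem_filter]
            refine ⟨?_, ?_, hvf.1⟩
            · rw [Set.Finite.mem_toFinset]; exact ⟨v, hvZ, rfl⟩
            · exact fun h => hvf.2 (by simp [h])
          exact hcov _ hfY
        have h3 := hmu_singleton u
        omega
    -- the piece and the surgered structure
    set A : Set V := b u ∪ ⋃ i ∈ R, b i with hAdef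
    set b' : ι → Set V := fun i => if i ∈ R then b u else b i with hb'def
    set Z' : Set V := (Z ∩ ⋃ i, b' i) ∪ b u with hZ'def
    set P : Set V := {v | v ∈ Z ∧ φ v ∈ R} with hPdef
    have hPmu : P.ncard = mu Z φ R := rfl
    have huR : u ∉ R := fun h => hRne u h rfl
    have hb'u : b' u = b u := by rw [hb'def]; simp [huR]
    have hU'U : (⋃ i, b' i) ⊆ ⋃ i, b i := by
      intro x hx
      obtain ⟨i, hi⟩ := Set.mem_iUnion.1 hx
      by_cases hiR : i ∈ R
      · rw [hb'def] at hi; simp only [if_pos hiR] at hi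
        exact Set.mem_iUnion.2 ⟨u, hi⟩
      · rw [hb'def] at hi; simp only [if_neg hiR] at hi
        exact Set.mem_iUnion.2 ⟨i, hi⟩
    have hS1 : ∀ v, v ∉ b u → ∀ i, i ∈ R → v ∈ b i → ∀ j, v ∈ b j → j ∈ R := by
      intro v hvbu i hiR hvi j hvj
      exact hRcl i hiR j (hconn v i j u hvi hvj hvbu)
    have hAU' : ∀ x ∈ A, x ∈ (⋃ i, b' i) → x ∈ b u := by
      rintro x hx hxU'
      rcases hx with hx | hx
      · exact hx
      · obtain ⟨i, hiR, hxbi⟩ := Set.mem_iUnion₂.1 hx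
        obtain ⟨j, hxj⟩ := Set.mem_iUnion.1 hxU'
        by_cases hjR : j ∈ R
        · rw [hb'def] at hxj; simpa only [if_pos hjR] using hxj
        · rw [hb'def] at hxj; simp only [if_neg hjR] at hxj
          by_contra hxbu
          exact hjR (hS1 x hxbu i hiR hxbi j hxj)
    have hsize' : ∀ i, (b' i).ncard ≤ k := by
      intro i
      rw [hb'def]
      by_cases hiR : i ∈ R
      · simp only [if_pos hiR]; exact hsize u
      · simp only [if_neg hiR]; exact hsize i
    have hedge' : ∀ x y : V, G.Adj x y → x ∈ (⋃ i, b' i) → y ∈ (⋃ i, b' i) →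
        ∃ i, x ∈ b' i ∧ y ∈ b' i := by
      intro x y hxy hx hy
      obtain ⟨i, hxi, hyi⟩ := hedge x y hxy (hU'U hx) (hU'U hy)
      by_cases hiR : i ∈ R
      · have hxbu : x ∈ b u := hAU' x (Or.inr (Set.mem_iUnion₂.2 ⟨i, hiR, hxi⟩)) hx
        have hybu : y ∈ b u := hAU' y (Or.inr (Set.mem_iUnion₂.2 ⟨i, hiR, hyi⟩)) hy
        exact ⟨i, by rw [hb'def]; simp only [if_pos hiR]; exact ⟨hxbu, hybu⟩⟩
      · exact ⟨i, by rw [hb'def]; simp only [if_neg hiR]; exact ⟨hxi, hyi⟩⟩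
    have hS3 : ∀ i' ∈ R, ∀ c, c ∉ R → c ≠ u → Avoid t c i' u := by
      intro i' hi' c hcR hcu
      have hi'u : i' ≠ u := hRne _ hi'
      have hc : c ∉ (pt ht u i').support := by
        intro hc'
        by_cases hcu' : c = u
        · exact hcu hcu'
        · exact hcR (hRcl i' hi' c (avoid_of_mem_pt ht hc' hcu').symm)
      exact (avoid_of_not_mem_pt ht hc).symm
    have hconn' : ∀ (v : V) (i j c : ι), v ∈ b' i → v ∈ b' j → v ∉ b' c →
        Avoid t c i j := by
      intro v i j c hvi hvj hvc
      by_cases hvbu : v ∈ b u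
      · have hcR : c ∉ R := by
          intro h
          apply hvc
          rw [hb'def]; simp only [if_pos h]; exact hvbu
        have hcu : c ≠ u := by
          rintro rfl
          apply hvc
          rw [hb'def]; simp only [if_neg hcR]; exact hvbu
        have hvbc : v ∉ b c := by
          intro h
          apply hvc
          rw [hb'def]; simp only [if_neg hcR]; exact h
        have key : ∀ i', v ∈ b' i' → Avoid t c i' u := by
          intro i' hi'
          by_cases hi'R : i' ∈ R
          · exact hS3 i' hi'R c hcR hcu
          · have hvb : v ∈ b i' := by
              rw [hb'def] at hi'; simpa only [if_neg hi'R] using hi'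
            exact hconn v i' u c hvb hvbu hvbc
        exact (key i hvi).trans (key j hvj).symm
      · have hb : ∀ x, v ∈ b' x → (x ∉ R ∧ v ∈ b x) := by
          intro x hx
          by_cases hxR : x ∈ R
          · rw [hb'def] at hx; simp only [if_pos hxR] at hx
            exact absurd hx hvbu
          · rw [hb'def] at hx; simp only [if_neg hxR] at hx
            exact ⟨hxR, hx⟩
        obtain ⟨hiR, hvi'⟩ := hb i hvi
        obtain ⟨hjR, hvj'⟩ := hb j hvj
        have hvbc : v ∉ b c := by
          intro h
          by_cases hcR : c ∈ R
          · exact hiR (hS1 v hvbu c hcR h i hvi')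
          · apply hvc
            rw [hb'def]; simp only [if_neg hcR]; exact h
        exact hconn v i j c hvi' hvj' hvbc
    have hbuU' : b u ⊆ ⋃ i, b' i := by
      intro x hx
      exact Set.mem_iUnion.2 ⟨u, by rw [hb'u]; exact hx⟩
    have hZ'U' : Z' ⊆ ⋃ i, b' i := by
      rintro x (hx | hx)
      · exact hx.2
      · exact hbuU' hx
    have hPZ : P ⊆ Z := fun v hv => hv.1
    have hPnotU' : ∀ x ∈ P, x ∉ b u → x ∉ (⋃ i, b' i) := by
      rintro x ⟨hxZ, hxR⟩ hxbu hxU'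
      obtain ⟨j, hxj⟩ := Set.mem_iUnion.1 hxU'
      by_cases hjR : j ∈ R
      · rw [hb'def] at hxj; simp only [if_pos hjR] at hxj
        exact hxbu hxj
      · rw [hb'def] at hxj; simp only [if_neg hjR] at hxj
        exact hjR (hS1 x hxbu (φ x) hxR (hφ x hxZ) j hxj)
    have hZ'sub : Z' ⊆ (Z \ P) ∪ b u := by
      rintro x (⟨hxZ, hxU'⟩ | hx)
      · by_cases hxbu : x ∈ b u
        · exact Or.inr hxbu
        · refine Or.inl ⟨hxZ, fun hP => ?_⟩
          exact hPnotU' x hP hxbu hxU'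
      · exact Or.inr hx
    have hZ'card : Z'.ncard + lam ≤ Z.ncard + k := by
      have h1 : Z'.ncard ≤ (Z \ P).ncard + (b u).ncard :=
        le_trans (Set.ncard_le_ncard hZ'sub (Set.toFinite _)) (Set.ncard_union_le _ _)
      have h2 : (Z \ P).ncard = Z.ncard - P.ncard := Set.ncard_diff hPZ (Set.toFinite _)
      have h3 : P.ncard ≤ Z.ncard := Set.ncard_le_ncard hPZ (Set.toFinite _)
      have h4 := hsize u
      have h5 : lam ≤ P.ncard := by rw [hPmu]; exact hRlam
      omega
    have hlamles : lam ≤ s := by omega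
    have hZ'lt : Z'.ncard < m := by omega
    obtain ⟨C', l', hC'U, hC'card, hl'count, hne', hsubU', hcov', hedgecov', hpw', hwt'⟩ :=
      IH Z'.ncard hZ'lt b' Z' le_rfl hsize' hedge' hconn' hZ'U'
    -- assemble
    refine ⟨b u ∪ C', A :: l', ?_, ?_, ?_, ?_, ?_, ?_, ?_, ?_, ?_⟩
    · -- C ⊆ ⋃ b
      rintro x (hx | hx)
      · exact Set.mem_iUnion.2 ⟨u, hx⟩
      · exact hU'U (hC'U hx)
    · -- cardinality of C
      by_cases hl0 : l' = []
      · have hU'e : (⋃ i, b' i) = ∅ := by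
          rw [Set.eq_empty_iff_forall_notMem]
          intro x hx
          obtain ⟨B, hB, -⟩ := hcov' x hx
          rw [hl0] at hB
          exact absurd hB List.not_mem_nil
        have hbue : b u = ∅ := by
          rw [Set.eq_empty_iff_forall_notMem]
          intro x hx
          exact (hU'e ▸ hbuU' hx : x ∈ (∅ : Set V))
        have hC'e : C' = ∅ := by
          rw [Set.eq_empty_iff_forall_notMem]
          intro x hx
          exact (hU'e ▸ hC'U hx : x ∈ (∅ : Set V))
        rw [hbue, hC'e]
        simp
      · have hlen1 : 1 ≤ l'.length := by
          cases l' with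
          | nil => exact absurd rfl hl0
          | cons a l => simp
        have h1 : (b u ∪ C').ncard ≤ (b u).ncard + C'.ncard := Set.ncard_union_le _ _
        have h2 := hsize u
        have h3 : (A :: l').length - 1 = l'.length := by simp
        rw [h3]
        obtain ⟨n', hn'⟩ : ∃ n', l'.length = n' + 1 := ⟨l'.length - 1, by omega⟩
        rw [hn'] at hC'card ⊢
        simp only [Nat.add_sub_cancel] at hC'card
        have h4 : k * (n' + 1) = k * n' + k := by ring
        omega
    · -- counting clusters against the weight
      have h3 : (A :: l').length - 1 = l'.length := by simp
      rw [h3]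
      rcases Nat.eq_zero_or_pos l'.length with h0 | hpos
      · rw [h0]; simp
      · obtain ⟨n', hn'⟩ : ∃ n', l'.length = n' + 1 := ⟨l'.length - 1, by omega⟩
        rw [hn'] at hl'count ⊢
        simp only [Nat.add_sub_cancel] at hl'count
        have hkey : (lam - k) * (n' + 1) = (lam - k) * n' + (lam - k) := by ring
        omega
    · -- nonempty
      intro B hB
      rcases List.mem_cons.1 hB with rfl | hB'
      · obtain ⟨v, hvZ, hvR⟩ := exists_of_mu_pos (show 0 < mu Z φ R by omega)
        exact ⟨v, Or.inr (Set.mem_iUnion₂.2 ⟨φ v, hvR, hφ v hvZ⟩)⟩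
      · exact hne' B hB'
    · -- contained in the universe
      intro B hB
      rcases List.mem_cons.1 hB with rfl | hB'
      · rintro x (hx | hx)
        · exact Set.mem_iUnion.2 ⟨u, hx⟩
        · obtain ⟨i, hiR, hxbi⟩ := Set.mem_iUnion₂.1 hx
          exact Set.mem_iUnion.2 ⟨i, hxbi⟩
      · exact fun x hx => hU'U (hsubU' B hB' hx)
    · -- coverage
      intro x hx
      obtain ⟨i, hxi⟩ := Set.mem_iUnion.1 hx
      by_cases hiR : i ∈ R
      · exact ⟨A, List.mem_cons_self, Or.inr (Set.mem_iUnion₂.2 ⟨i, hiR, hxi⟩)⟩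
      · have hxU' : x ∈ ⋃ i, b' i := by
          refine Set.mem_iUnion.2 ⟨i, ?_⟩
          rw [hb'def]; simp only [if_neg hiR]; exact hxi
        obtain ⟨B, hB, hxB⟩ := hcov' x hxU'
        exact ⟨B, List.mem_cons_of_mem _ hB, hxB⟩
    · -- edges
      intro x y hxy hx hy
      obtain ⟨i, hxi, hyi⟩ := hedge x y hxy hx hy
      by_cases hiR : i ∈ R
      · exact ⟨A, List.mem_cons_self, Or.inr (Set.mem_iUnion₂.2 ⟨i, hiR, hxi⟩),
          Or.inr (Set.mem_iUnion₂.2 ⟨i, hiR, hyi⟩)⟩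
      · have hxU' : x ∈ ⋃ j, b' j := by
          refine Set.mem_iUnion.2 ⟨i, ?_⟩
          rw [hb'def]; simp only [if_neg hiR]; exact hxi
        have hyU' : y ∈ ⋃ j, b' j := by
          refine Set.mem_iUnion.2 ⟨i, ?_⟩
          rw [hb'def]; simp only [if_neg hiR]; exact hyi
        obtain ⟨B, hB, hxB, hyB⟩ := hedgecov' x y hxy hxU' hyU'
        exact ⟨B, List.mem_cons_of_mem _ hB, hxB, hyB⟩
    · -- pairwise intersections inside C
      refine List.Pairwise.cons ?_ (List.Pairwise.imp ?_ hpw')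
      · intro B hB
        intro x hx
        have hxU' : x ∈ ⋃ i, b' i := hsubU' B hB hx.2
        exact Or.inl (hAU' x hx.1 hxU')
      · intro B B' h x hx
        exact Or.inr (h hx)
    · -- weights
      intro B hB
      rcases List.mem_cons.1 hB with rfl | hB'
      · -- the piece A
        have hsub : A ∩ ((b u ∪ C') ∪ Z) ⊆ b u ∪ P := by
          rintro x ⟨hxA, hx⟩
          rcases hx with (hx | hx) | hx
          · exact Or.inl hx
          · exact Or.inl (hAU' x hxA (hC'U hx))
          · by_cases hxbu : x ∈ b u
            · exact Or.inl hxbu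
            · rcases hxA with hxA | hxA
              · exact absurd hxA hxbu
              · obtain ⟨i, hiR, hxbi⟩ := Set.mem_iUnion₂.1 hxA
                exact Or.inr ⟨hx, hS1 x hxbu i hiR hxbi (φ x) (hφ x hx)⟩
        have h1 : (A ∩ ((b u ∪ C') ∪ Z)).ncard ≤ (b u).ncard + P.ncard :=
          le_trans (Set.ncard_le_ncard hsub (Set.toFinite _)) (Set.ncard_union_le _ _)
        have h2 := hsize u
        have h3 : P.ncard ≤ τ := by rw [hPmu]; exact hRle
        omega
      · -- an old piece
        have hsub : B ∩ ((b u ∪ C') ∪ Z) ⊆ B ∩ (C' ∪ Z') := by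
          rintro x ⟨hxB, hx⟩
          refine ⟨hxB, ?_⟩
          rcases hx with (hx | hx) | hx
          · exact Or.inr (Or.inr hx)
          · exact Or.inl hx
          · exact Or.inr (Or.inl ⟨hx, hsubU' B hB' hxB⟩)
        exact le_trans (Set.ncard_le_ncard hsub (Set.toFinite _)) (hwt' B hB')

/-! ### Converting the connectivity condition of a tree decomposition -/

lemma avoid_of_induce_walk {S : Set ι} (hc : ∀ x ∈ S, x ≠ c) :
    ∀ (a b : S) (_w : (t.induce S).Walk a b), Avoid t c (a : ι) (b : ι) := by
  intro a b w
  induction w with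
  | nil => exact avoid_refl (hc _ (Subtype.mem _))
  | cons h q IHq =>
    rename_i x y z
    have hadj : t.Adj (x : ι) (y : ι) := h
    exact (avoid_of_adj hadj (hc _ x.2) (hc _ y.2)).trans IHq

end TWS

/-- Splitting lemma for graphs of bounded treewidth: if `tw(G) < k`, `s ≥ 12k`
and `|W| ≤ p·s`, then there are `C ⊆ V(G)` and nonempty sets `A₁, …, A_t`
(`t < 6p`) with `|C| < 6pk`, `|A_i ∩ (C ∪ W)| ≤ s`, `G = G[A₁] ∪ ⋯ ∪ G[A_t]`,
and `A_i ∩ A_j ⊆ C` for `i ≠ j`. -/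
theorem treewidth_splitting (k s p : ℕ) (hk : 0 < k) (hs : 0 < s) (hp : 0 < p)
    (hsk : 12 * k ≤ s) {V : Type} [Fintype V] (G : SimpleGraph V)
    (htw : TreewidthLE G (k - 1)) (W : Set V) (hW : W.ncard ≤ p * s) :
    ∃ (C : Set V) (t : ℕ) (A : Fin t → Set V),
      t < 6 * p ∧
      C.ncard < 6 * p * k ∧
      (∀ i, (A i).Nonempty) ∧
      (∀ i, (A i ∩ (C ∪ W)).ncard ≤ s) ∧
      (∀ v : V, ∃ i, v ∈ A i) ∧
      (∀ ⦃u v : V⦄, G.Adj u v → ∃ i, u ∈ A i ∧ v ∈ A i) ∧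
      (∀ i j, i ≠ j → A i ∩ A j ⊆ C) := by
  classical
  obtain ⟨D, hD⟩ := htw
  have hk1 : 1 ≤ k := hk
  have hDk : ∀ i, (D.bag i).ncard ≤ k := by
    intro i; have := hD i; omega
  have hconn : ∀ (v : V) (i j c : D.ι), v ∈ D.bag i → v ∈ D.bag j → v ∉ D.bag c →
      TWS.Avoid D.t c i j := by
    intro v i j c hi hj hc
    have hS : ∀ x ∈ {i | v ∈ D.bag i}, x ≠ c := fun x hx h => hc (h ▸ hx)
    obtain ⟨w⟩ := (D.bag_connected v).preconnected ⟨i, hi⟩ ⟨j, hj⟩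
    exact TWS.avoid_of_induce_walk hS ⟨i, hi⟩ ⟨j, hj⟩ w
  have hU : (⋃ i, D.bag i) = Set.univ := by
    ext v; simp only [Set.mem_iUnion, Set.mem_univ, iff_true]; exact D.mem_bag v
  have hedge : ∀ x y : V, G.Adj x y → x ∈ (⋃ i, D.bag i) → y ∈ (⋃ i, D.bag i) →
      ∃ i, x ∈ D.bag i ∧ y ∈ D.bag i := fun x y hxy _ _ => D.edge_bag hxy
  obtain ⟨C, l, hCU, hCcard, hcount, hne, hsub, hcov, hedges, hpw, hwt⟩ :=
    TWS.main_rec G D.tree k s hk1 hsk W.ncard D.bag W le_rfl hDk hedge hconn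
      (by rw [hU]; exact Set.subset_univ W)
  set q := l.length - 1 with hq
  have hq4 : q ≤ 4 * p := by
    have hc1 : ((s+2)/3 - k) * q ≤ p * s := le_trans hcount hW
    have hmod := Nat.div_add_mod (s+2) 3
    have hmodlt : (s+2) % 3 < 3 := Nat.mod_lt _ (by norm_num)
    have hs4 : s ≤ 4 * ((s+2)/3 - k) := by omega
    have h2 : s * q ≤ (4 * ((s+2)/3 - k)) * q := Nat.mul_le_mul_right q hs4
    have h3 : (4 * ((s+2)/3 - k)) * q = 4 * (((s+2)/3 - k) * q) := by ring
    have h4 : s * q ≤ 4 * (p * s) := by omega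
    have h5 : 4 * (p * s) = s * (4 * p) := by ring
    have h6 : s * q ≤ s * (4 * p) := by omega
    exact Nat.le_of_mul_le_mul_left h6 hs
  have hlen : l.length < 6 * p := by
    have hp1 : 1 ≤ p := hp
    omega
  refine ⟨C, l.length, fun i => l.get i, hlen, ?_, ?_, ?_, ?_, ?_, ?_⟩
  · have h2 : k * q ≤ k * (4 * p) := Nat.mul_le_mul_left k hq4
    have h3 : k * (4*p) = 4 * (p * k) := by ring
    have h4 : 6 * p * k = 6 * (p * k) := by ring
    have h5 : 1 ≤ p * k := Nat.mul_pos hp hk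
    omega
  · intro i; exact hne _ (List.get_mem l i)
  · intro i; exact hwt _ (List.get_mem l i)
  · intro v
    obtain ⟨B, hBl, hvB⟩ := hcov v (by rw [hU]; trivial)
    obtain ⟨n, hn⟩ := List.get_of_mem hBl
    exact ⟨n, by show v ∈ l.get n; rw [hn]; exact hvB⟩
  · intro x y hxy
    obtain ⟨B, hBl, hxB, hyB⟩ := hedges x y hxy (by rw [hU]; trivial) (by rw [hU]; trivial)
    obtain ⟨n, hn⟩ := List.get_of_mem hBl
    refine ⟨n, ?_, ?_⟩ <;> (show _ ∈ l.get n; rw [hn]) 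
    · exact hxB
    · exact hyB
  · intro i j hij
    have hpg := List.pairwise_iff_get.1 hpw
    rcases lt_or_gt_of_ne hij with h | h
    · exact hpg i j h
    · intro x hx
      exact hpg j i h ⟨hx.2, hx.1⟩
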